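/- Let S = (P, L) be a generalized quadrangle of order (2,2) and let (R, ψ) be a faithful representation of S. Then |R| = 2^4 or |R| = 2^5. -/

import Mathlib

open scoped Classical

/-- A slim partial linear space: a nonempty point set, a nonempty collection of
lines each of which is a 3-element set of points, such that any two distinct
points lie in at most one common line. -/
structure SlimPLS (P : Type*) where
  lines : Set (Finset P)
  nonempty_pts : Nonempty P
  nonempty_lines : lines.Nonempty
  three_points : ∀ l ∈ lines, l.card = 3
  unique_line : ∀ l₁ ∈ lines, ∀ l₂ ∈ lines, ∀ x y : P,
    x ≠ y → x ∈ l₁ → y ∈ l₁ → x ∈ l₂ → y ∈ l₂ → l₁ = l₂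

namespace SlimPLS

variable {P : Type*}

/-- Two points are collinear if they are distinct and lie on a common line. -/
def Collinear (S : SlimPLS P) (x y : P) : Prop :=
  x ≠ y ∧ ∃ l ∈ S.lines, x ∈ l ∧ y ∈ l

/-- The collinearity graph of a slim partial linear space. -/
def graph (S : SlimPLS P) : SimpleGraph P where
  Adj x y := S.Collinear x y
  symm := ⟨fun x y h => ⟨Ne.symm h.1, h.2.elim fun l hl => ⟨l, hl.1, hl.2.2, hl.2.1⟩⟩⟩
  loopless := ⟨fun x h => h.1 rfl⟩

/-- `S` is a generalized quadrangle of order `(2, t)`: it is connected, no point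
is collinear with all other points, every point is on exactly `t+1` lines, and
for every point `x` and line `l` with `x ∉ l` there is exactly one point of `l`
collinear with `x`. -/
def IsGQ (S : SlimPLS P) (t : ℕ) : Prop :=
  S.graph.Connected ∧
  (∀ x : P, ∃ y : P, y ≠ x ∧ ¬ S.Collinear x y) ∧
  (∀ x : P, {l | l ∈ S.lines ∧ x ∈ l}.ncard = t + 1) ∧
  (∀ x : P, ∀ l ∈ S.lines, x ∉ l → ∃! y : P, y ∈ l ∧ S.Collinear x y)

/-- A set of points is an arc if its points are pairwise non-collinear. -/
def IsArc (S : SlimPLS P) (T : Set P) : Prop :=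
  ∀ x ∈ T, ∀ y ∈ T, x ≠ y → ¬ S.Collinear x y

/-- `{a,b,c}` is a complete 3-arc: three pairwise distinct, pairwise
non-collinear points not contained in a 4-arc. -/
def Complete3Arc (S : SlimPLS P) (a b c : P) : Prop :=
  a ≠ b ∧ a ≠ c ∧ b ≠ c ∧ S.IsArc {a, b, c} ∧
  ∀ d : P, d ∉ ({a, b, c} : Set P) → ¬ S.IsArc (insert d {a, b, c})

/-- `{a,b,c}` is a complete 3-arc of the subset `Q`: three pairwise distinct,
pairwise non-collinear points of `Q` not contained in a 4-arc inside `Q`. -/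
def Complete3ArcIn (S : SlimPLS P) (Q : Set P) (a b c : P) : Prop :=
  a ∈ Q ∧ b ∈ Q ∧ c ∈ Q ∧ a ≠ b ∧ a ≠ c ∧ b ≠ c ∧ S.IsArc {a, b, c} ∧
  ∀ d ∈ Q, d ∉ ({a, b, c} : Set P) → ¬ S.IsArc (insert d {a, b, c})

/-- `Q` is a sub-generalized-quadrangle of order `(2,t)` of `S`: together with
the lines of `S` contained in it, `Q` is a `(2,t)`-GQ; in particular any line
meeting `Q` in at least two points is contained in `Q`. -/
def IsSubGQ (S : SlimPLS P) (Q : Set P) (t : ℕ) : Prop :=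
  Q.Nonempty ∧
  (∃ l ∈ S.lines, (l : Set P) ⊆ Q) ∧
  (∀ l ∈ S.lines, ∀ x ∈ l, ∀ y ∈ l, x ≠ y → x ∈ Q → y ∈ Q → (l : Set P) ⊆ Q) ∧
  (SimpleGraph.induce Q S.graph).Connected ∧
  (∀ x ∈ Q, ∃ y ∈ Q, y ≠ x ∧ ¬ S.Collinear x y) ∧
  (∀ x ∈ Q, {l | l ∈ S.lines ∧ x ∈ l ∧ (l : Set P) ⊆ Q}.ncard = t + 1) ∧
  (∀ x ∈ Q, ∀ l ∈ S.lines, (l : Set P) ⊆ Q → x ∉ l → ∃! y : P, y ∈ l ∧ S.Collinear x y)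

/-- `S` is a near hexagon: connected of diameter 3, no point collinear with all
other points, and for every point `x` and line `l` there is a unique point of
`l` nearest to `x`. -/
def IsNearHexagon (S : SlimPLS P) : Prop :=
  S.graph.Connected ∧
  (∀ x y : P, S.graph.dist x y ≤ 3) ∧
  (∃ x y : P, S.graph.dist x y = 3) ∧
  (∀ x : P, ∃ y : P, y ≠ x ∧ ¬ S.Collinear x y) ∧
  (∀ x : P, ∀ l ∈ S.lines, ∃! y : P, y ∈ l ∧ ∀ z ∈ l, S.graph.dist x y ≤ S.graph.dist x z)

/-- `S` is dense: any two points at distance 2 have at least two common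
neighbours. -/
def IsDense (S : SlimPLS P) : Prop :=
  ∀ x y : P, S.graph.dist x y = 2 →
    ∃ u v : P, u ≠ v ∧ S.Collinear x u ∧ S.Collinear u y ∧ S.Collinear x v ∧ S.Collinear v y

/-- `Q` is a quad: a convex subset of diameter 2 in which no point is collinear
with all other points of `Q`. -/
def IsQuad (S : SlimPLS P) (Q : Set P) : Prop :=
  (∀ u ∈ Q, ∀ v ∈ Q, ∀ w : P,
      S.graph.dist u w + S.graph.dist w v = S.graph.dist u v → w ∈ Q) ∧
  (∀ u ∈ Q, ∀ v ∈ Q, S.graph.dist u v ≤ 2) ∧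
  (∃ u ∈ Q, ∃ v ∈ Q, S.graph.dist u v = 2) ∧
  (∀ u ∈ Q, ∃ v ∈ Q, v ≠ u ∧ ¬ S.Collinear u v)

/-- A quad `Q` is of type `(2, t₂)` if every point of `Q` lies on exactly
`t₂ + 1` lines contained in `Q`. -/
def QuadType (S : SlimPLS P) (Q : Set P) (t₂ : ℕ) : Prop :=
  ∀ x ∈ Q, {l | l ∈ S.lines ∧ x ∈ l ∧ (l : Set P) ⊆ Q}.ncard = t₂ + 1

/-- The point-quad pair `(x, Q)` is classical: there is a unique point `y ∈ Q`
nearest to `x`, with `d(x,z) = d(x,y) + d(y,z)` for all `z ∈ Q`. -/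
def IsClassicalPair (S : SlimPLS P) (x : P) (Q : Set P) : Prop :=
  ∃! y : P, y ∈ Q ∧ ∀ z ∈ Q, S.graph.dist x z = S.graph.dist x y + S.graph.dist y z

/-- A quad is classical (big) if every point-quad pair with it is classical. -/
def IsClassicalQuad (S : SlimPLS P) (Q : Set P) : Prop :=
  ∀ x : P, S.IsClassicalPair x Q

/-- A subspace: any line containing two of its points is contained in it. -/
def IsSubspace (S : SlimPLS P) (X : Set P) : Prop :=
  ∀ l ∈ S.lines, ∀ x ∈ l, ∀ y ∈ l, x ≠ y → x ∈ X → y ∈ X → (l : Set P) ⊆ X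

/-- The subspace generated by a set of points. -/
def subspaceGen (S : SlimPLS P) (A : Set P) : Set P :=
  ⋂₀ {X | S.IsSubspace X ∧ A ⊆ X}

/-- `NPdim S` is the rank over `F₂` of the distance-3 adjacency matrix. -/
noncomputable def NPdim [Fintype P] (S : SlimPLS P) : ℕ :=
  Matrix.rank (Matrix.of fun x y : P => if S.graph.dist x y = 3 then (1 : ZMod 2) else 0)

/-- `dimV S` is the dimension of the universal representation module of `S`:
the free `F₂`-vector space on the points modulo the span of the elements
`v_x + v_y + v_z` for the lines `{x,y,z}`. -/
noncomputable def dimV (S : SlimPLS P) : ℕ :=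
  Module.finrank (ZMod 2)
    ((P →₀ ZMod 2) ⧸ Submodule.span (ZMod 2)
      {f : P →₀ ZMod 2 | ∃ l ∈ S.lines, f = ∑ x ∈ l, Finsupp.single x 1})

end SlimPLS

/-- A representation of a slim partial linear space `S`: an assignment of an
order-2 element `r x` of `R` to each point `x`, such that the images generate
`R` and for every line `{x,y,z}` the set `{1, r x, r y, r z}` is a Klein four
subgroup (`r x * r y = r z` for the three pairwise distinct points of a line). -/
structure SlimPLS.Rep {P : Type*} (S : SlimPLS P) (R : Type*) [Group R] where
  r : P → R
  order_two : ∀ x : P, orderOf (r x) = 2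
  gen : Subgroup.closure (Set.range r) = ⊤
  line_rel : ∀ l ∈ S.lines, ∀ x ∈ l, ∀ y ∈ l, ∀ z ∈ l,
    x ≠ y → x ≠ z → y ≠ z → r x * r y = r z

/-- A finite 2-group is extraspecial if its Frattini subgroup, commutator
subgroup and center coincide and have order 2. -/
def IsExtraspecial (G : Type*) [Group G] : Prop :=
  Finite G ∧ IsPGroup 2 G ∧ frattini G = commutator G ∧
    commutator G = Subgroup.center G ∧ Nat.card (Subgroup.center G) = 2


section GQ22Aux

open SlimPLS

variable {P : Type*} {S : SlimPLS P}

/-- Three points forming a line, with full coverage information. -/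
def SlimPLS.LineW {P : Type*} (S : SlimPLS P) (a b c : P) : Prop :=
  a ≠ b ∧ a ≠ c ∧ b ≠ c ∧
    ∃ l ∈ S.lines, a ∈ l ∧ b ∈ l ∧ c ∈ l ∧ ∀ w ∈ l, w = a ∨ w = b ∨ w = c

lemma coll_symm {x y : P} (h : S.Collinear x y) : S.Collinear y x :=
  ⟨h.1.symm, h.2.elim fun l hl => ⟨l, hl.1, hl.2.2, hl.2.1⟩⟩

lemma coll_ne {x y : P} (h : S.Collinear x y) : x ≠ y := h.1

lemma not_coll_symm {x y : P} (h : ¬ S.Collinear x y) : ¬ S.Collinear y x :=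
  fun hc => h (coll_symm hc)

lemma lineW_swap {a b c : P} (h : S.LineW a b c) : S.LineW b a c := by
  obtain ⟨hab, hac, hbc, l, hl, hal, hbl, hcl, hcov⟩ := h
  exact ⟨hab.symm, hbc, hac, l, hl, hbl, hal, hcl, fun w hw => by rcases hcov w hw with rfl|rfl|rfl <;> tauto⟩

lemma lineW_rot {a b c : P} (h : S.LineW a b c) : S.LineW b c a := by
  obtain ⟨hab, hac, hbc, l, hl, hal, hbl, hcl, hcov⟩ := h
  exact ⟨hbc, hab.symm, hac.symm, l, hl, hbl, hcl, hal, fun w hw => by rcases hcov w hw with rfl|rfl|rfl <;> tauto⟩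

lemma lineW_coll12 {a b c : P} (h : S.LineW a b c) : S.Collinear a b := by
  obtain ⟨hab, hac, hbc, l, hl, hal, hbl, hcl, hcov⟩ := h
  exact ⟨hab, l, hl, hal, hbl⟩

lemma lineW_coll13 {a b c : P} (h : S.LineW a b c) : S.Collinear a c :=
  coll_symm (lineW_coll12 (lineW_rot (lineW_rot h)))

lemma lineW_coll23 {a b c : P} (h : S.LineW a b c) : S.Collinear b c :=
  lineW_coll12 (lineW_rot h)

lemma exists_third {l : Finset P} (hl : l ∈ S.lines) {a b : P} (ha : a ∈ l) (hb : b ∈ l)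
    (hab : a ≠ b) : ∃ c, S.LineW a b c ∧ c ∈ l ∧ ∀ w ∈ l, w = a ∨ w = b ∨ w = c := by
  have h3 := S.three_points l hl
  have hberase : b ∈ l.erase a := Finset.mem_erase.mpr ⟨hab.symm, hb⟩
  have hcard : ((l.erase a).erase b).card = 1 := by
    rw [Finset.card_erase_of_mem hberase, Finset.card_erase_of_mem ha, h3]
  obtain ⟨c, hc⟩ := Finset.card_eq_one.mp hcard
  have hcmem : c ∈ (l.erase a).erase b := hc ▸ Finset.mem_singleton_self c
  obtain ⟨hcb, hcmem'⟩ := Finset.mem_erase.mp hcmem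
  obtain ⟨hca, hcl⟩ := Finset.mem_erase.mp hcmem'
  have hcov : ∀ w ∈ l, w = a ∨ w = b ∨ w = c := by
    intro w hw
    by_cases hwa : w = a
    · exact Or.inl hwa
    by_cases hwb : w = b
    · exact Or.inr (Or.inl hwb)
    have hww : w ∈ (l.erase a).erase b :=
      Finset.mem_erase.mpr ⟨hwb, Finset.mem_erase.mpr ⟨hwa, hw⟩⟩
    rw [hc] at hww
    exact Or.inr (Or.inr (Finset.mem_singleton.mp hww))
  exact ⟨c, ⟨hab, hca.symm, hcb.symm, l, hl, ha, hb, hcl, hcov⟩, hcl, hcov⟩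

lemma exists_lineW {a b : P} (h : S.Collinear a b) : ∃ c, S.LineW a b c := by
  obtain ⟨hab, l, hl, hal, hbl⟩ := h
  obtain ⟨c, hc, -⟩ := exists_third hl hal hbl hab
  exact ⟨c, hc⟩

lemma lineW_eq {a b c c' : P} (h : S.LineW a b c) (h' : S.LineW a b c') : c' = c := by
  obtain ⟨hab, hac, hbc, l, hl, hal, hbl, hcl, hcov⟩ := h
  obtain ⟨-, hac', hbc', l', hl', hal', hbl', hcl', -⟩ := h'
  have hll : l = l' := S.unique_line l hl l' hl' a b hab hal hbl hal' hbl'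
  rcases hcov c' (hll ▸ hcl') with rfl|rfl|rfl
  · exact absurd rfl hac'.symm
  · exact absurd rfl hbc'.symm
  · rfl

lemma gq_not_coll (hGQ : S.IsGQ 2) {a b c e : P} (h : S.LineW a b c)
    (hea : e ≠ a) (heb : e ≠ b) (hec : e ≠ c) (hca : S.Collinear e a) :
    ¬ S.Collinear e b := by
  obtain ⟨hab, hac, hbc, l, hl, hal, hbl, hcl, hcov⟩ := h
  have hel : e ∉ l := by
    intro hel
    rcases hcov e hel with rfl|rfl|rfl
    exacts [hea rfl, heb rfl, hec rfl]
  intro hcb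
  obtain ⟨w, -, huniq⟩ := hGQ.2.2.2 e l hl hel
  have h1 := huniq a ⟨hal, hca⟩
  have h2 := huniq b ⟨hbl, hcb⟩
  exact hab (h1.trans h2.symm)

lemma gq_third_coll (hGQ : S.IsGQ 2) {a b c e : P} (h : S.LineW a b c)
    (hea : e ≠ a) (heb : e ≠ b) (hec : e ≠ c)
    (hna : ¬ S.Collinear e a) (hnb : ¬ S.Collinear e b) : S.Collinear e c := by
  obtain ⟨hab, hac, hbc, l, hl, hal, hbl, hcl, hcov⟩ := h
  have hel : e ∉ l := by
    intro hel
    rcases hcov e hel with rfl|rfl|rfl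
    exacts [hea rfl, heb rfl, hec rfl]
  obtain ⟨w, ⟨hwl, hcw⟩, -⟩ := hGQ.2.2.2 e l hl hel
  rcases hcov w hwl with rfl|rfl|rfl
  · exact absurd hcw hna
  · exact absurd hcw hnb
  · exact hcw

lemma gq_triangle (hGQ : S.IsGQ 2) {a b c e : P} (h : S.LineW a b c)
    (hca : S.Collinear e a) (hcb : S.Collinear e b) : e = c := by
  by_cases hec : e = c
  · exact hec
  · exact absurd hcb (gq_not_coll hGQ h hca.1 hcb.1 hec hca)

lemma three_lines (hGQ : S.IsGQ 2) (p : P) :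
    ∃ l1 l2 l3 : Finset P, (l1 ∈ S.lines ∧ p ∈ l1) ∧ (l2 ∈ S.lines ∧ p ∈ l2) ∧
      (l3 ∈ S.lines ∧ p ∈ l3) ∧ l1 ≠ l2 ∧ l1 ≠ l3 ∧ l2 ≠ l3 ∧
      ∀ l ∈ S.lines, p ∈ l → l = l1 ∨ l = l2 ∨ l = l3 := by
  have h3 : {l | l ∈ S.lines ∧ p ∈ l}.ncard = 3 := hGQ.2.2.1 p
  obtain ⟨a, b, c, hab, hac, hbc, hset⟩ := Set.ncard_eq_three.mp h3
  have ha : a ∈ {l | l ∈ S.lines ∧ p ∈ l} := by rw [hset]; simp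
  have hb : b ∈ {l | l ∈ S.lines ∧ p ∈ l} := by rw [hset]; simp
  have hc : c ∈ {l | l ∈ S.lines ∧ p ∈ l} := by rw [hset]; simp
  refine ⟨a, b, c, ha, hb, hc, hab, hac, hbc, fun l hl hpl => ?_⟩
  have : l ∈ ({a, b, c} : Set (Finset P)) := hset ▸ (⟨hl, hpl⟩ : l ∈ {l | l ∈ S.lines ∧ p ∈ l})
  simpa using this

lemma common_nbr (hGQ : S.IsGQ 2) {l : Finset P} (hl : l ∈ S.lines) {x y : P}
    (hx : x ∈ l) (hxy : x ≠ y) (hnc : ¬ S.Collinear x y) :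
    ∃ u, u ∈ l ∧ S.Collinear x u ∧ S.Collinear y u := by
  have hyl : y ∉ l := fun hyl => hnc ⟨hxy, l, hl, hx, hyl⟩
  obtain ⟨u, ⟨hul, hcyu⟩, -⟩ := hGQ.2.2.2 y l hl hyl
  have hux : x ≠ u := fun h => hnc (coll_symm (h ▸ hcyu))
  exact ⟨u, hul, ⟨hux, l, hl, hx, hul⟩, hcyu⟩

lemma gq_config (hGQ : S.IsGQ 2) {x y : P} (hxy : x ≠ y) (hnc : ¬ S.Collinear x y) :
    ∃ u1 u2 a1 a2 b1 b2 m : P,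
      S.LineW x u1 a1 ∧ S.LineW x u2 a2 ∧ S.LineW y u1 b1 ∧ S.LineW y u2 b2 ∧
      S.LineW a1 b2 m ∧ S.LineW a2 b1 m := by
  obtain ⟨k1, k2, k3, ⟨hk1, hxk1⟩, ⟨hk2, hxk2⟩, -, hk12, -, -, -⟩ := three_lines hGQ x
  obtain ⟨u1, hu1k, hcxu1, hcyu1⟩ := common_nbr hGQ hk1 hxk1 hxy hnc
  obtain ⟨u2, hu2k, hcxu2, hcyu2⟩ := common_nbr hGQ hk2 hxk2 hxy hnc
  have hu12 : u1 ≠ u2 := by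
    rintro rfl
    exact hk12 (S.unique_line k1 hk1 k2 hk2 x u1 (coll_ne hcxu1) hxk1 hu1k hxk2 hu2k)
  obtain ⟨a1, W1, ha1k, -⟩ := exists_third hk1 hxk1 hu1k (coll_ne hcxu1)
  obtain ⟨a2, W2, ha2k, -⟩ := exists_third hk2 hxk2 hu2k (coll_ne hcxu2)
  obtain ⟨b1, W3⟩ := exists_lineW hcyu1
  obtain ⟨b2, W4⟩ := exists_lineW hcyu2
  have hcxa1 : S.Collinear x a1 := lineW_coll13 W1
  have hcxa2 : S.Collinear x a2 := lineW_coll13 W2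
  have hcyb1 : S.Collinear y b1 := lineW_coll13 W3
  have hcyb2 : S.Collinear y b2 := lineW_coll13 W4
  have hb1x : b1 ≠ x := by rintro rfl; exact hnc (coll_symm hcyb1)
  have hb2x : b2 ≠ x := by rintro rfl; exact hnc (coll_symm hcyb2)
  have ha1y : a1 ≠ y := by rintro rfl; exact hnc hcxa1
  have ha2y : a2 ≠ y := by rintro rfl; exact hnc hcxa2
  have hnxb1 : ¬ S.Collinear x b1 :=
    gq_not_coll hGQ (lineW_rot W3) (coll_ne hcxu1) hb1x.symm hxy hcxu1
  have hnxb2 : ¬ S.Collinear x b2 :=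
    gq_not_coll hGQ (lineW_rot W4) (coll_ne hcxu2) hb2x.symm hxy hcxu2
  have hnya1 : ¬ S.Collinear y a1 :=
    gq_not_coll hGQ (lineW_rot W1) (coll_ne hcyu1) ha1y.symm hxy.symm hcyu1
  have hnya2 : ¬ S.Collinear y a2 :=
    gq_not_coll hGQ (lineW_rot W2) (coll_ne hcyu2) ha2y.symm hxy.symm hcyu2
  have ha1u2 : a1 ≠ u2 := by rintro rfl; exact hnya1 hcyu2
  have ha2u1 : a2 ≠ u1 := by rintro rfl; exact hnya2 hcyu1
  have ha12 : a1 ≠ a2 := by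
    rintro rfl
    exact hk12 (S.unique_line k1 hk1 k2 hk2 x a1 (coll_ne hcxa1) hxk1 ha1k hxk2 ha2k)
  have hna1u2 : ¬ S.Collinear a1 u2 :=
    gq_not_coll hGQ W2 (coll_ne hcxa1).symm ha1u2 ha12 (coll_symm hcxa1)
  have hna2u1 : ¬ S.Collinear a2 u1 :=
    gq_not_coll hGQ W1 (coll_ne hcxa2).symm ha2u1 ha12.symm (coll_symm hcxa2)
  have hna1a2 : ¬ S.Collinear a1 a2 :=
    gq_not_coll hGQ (lineW_rot (lineW_swap W2)) (coll_ne hcxa1).symm ha12 ha1u2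
      (coll_symm hcxa1)
  have hb12 : b1 ≠ b2 := by
    rintro rfl
    exact hu12.symm (lineW_eq (lineW_rot (lineW_swap W3)) (lineW_rot (lineW_swap W4)))
  have hnb1b2 : ¬ S.Collinear b1 b2 :=
    gq_not_coll hGQ (lineW_rot (lineW_swap W4)) (coll_ne hcyb1).symm hb12
      (by rintro rfl; exact hnxb1 hcxu2) (coll_symm hcyb1)
  have ha1b2 : a1 ≠ b2 := by rintro rfl; exact hnxb2 hcxa1
  have hca1b2 : S.Collinear a1 b2 :=
    gq_third_coll hGQ W4 ha1y ha1u2 ha1b2 (not_coll_symm hnya1) hna1u2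
  have ha2b1 : a2 ≠ b1 := by rintro rfl; exact hnxb1 hcxa2
  have hca2b1 : S.Collinear a2 b1 :=
    gq_third_coll hGQ W3 ha2y ha2u1 ha2b1 (not_coll_symm hnya2) hna2u1
  obtain ⟨m, W5⟩ := exists_lineW hca1b2
  have ha2b2 : a2 ≠ b2 := by rintro rfl; exact hnxb2 hcxa2
  have ha2m : a2 ≠ m := by rintro rfl; exact hna1a2 (lineW_coll13 W5)
  have hnb2a2 : ¬ S.Collinear b2 a2 :=
    gq_not_coll hGQ (lineW_rot W2) (coll_ne (lineW_coll23 W4)).symm ha2b2.symm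
      hb2x (coll_symm (lineW_coll23 W4))
  have hca2m : S.Collinear a2 m :=
    gq_third_coll hGQ W5 ha12.symm ha2b2 ha2m (not_coll_symm hna1a2) (not_coll_symm hnb2a2)
  have hnb1a1 : ¬ S.Collinear b1 a1 :=
    gq_not_coll hGQ (lineW_rot W1) (coll_ne (lineW_coll23 W3)).symm
      (by rintro rfl; exact hnxb1 hcxa1) hb1x (coll_symm (lineW_coll23 W3))
  have hb1m : b1 ≠ m := by rintro rfl; exact (not_coll_symm hnb1b2) (lineW_coll23 W5)
  have hcb1m : S.Collinear b1 m :=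
    gq_third_coll hGQ W5 (by rintro rfl; exact hnxb1 hcxa1) hb12 hb1m hnb1a1 hnb1b2
  obtain ⟨m2, W6⟩ := exists_lineW hca2b1
  have hmm : m = m2 := gq_triangle hGQ W6 (coll_symm hca2m) (coll_symm hcb1m)
  subst hmm
  exact ⟨u1, u2, a1, a2, b1, b2, m, W1, W2, W3, W4, W5, W6⟩

section RepAux

variable {R : Type*} [Group R]

lemma lineW_mul (ρ : S.Rep R) {a b c : P} (h : S.LineW a b c) : ρ.r a * ρ.r b = ρ.r c := by
  obtain ⟨hab, hac, hbc, l, hl, hal, hbl, hcl, -⟩ := h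
  exact ρ.line_rel l hl a hal b hbl c hcl hab hac hbc

lemma rep_sq (ρ : S.Rep R) (p : P) : ρ.r p * ρ.r p = 1 := by
  have h := pow_orderOf_eq_one (ρ.r p)
  rwa [ρ.order_two, pow_two] at h

lemma comm_of_noncoll (hGQ : S.IsGQ 2) (ρ : S.Rep R) {x y : P} (hxy : x ≠ y)
    (hnc : ¬ S.Collinear x y) : ρ.r x * ρ.r y = ρ.r y * ρ.r x := by
  obtain ⟨u1, u2, a1, a2, b1, b2, m, W1, W2, W3, W4, W5, W6⟩ := gq_config hGQ hxy hnc
  have h1 : ρ.r u1 * ρ.r a1 = ρ.r x := lineW_mul ρ (lineW_rot W1)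
  have h2 : ρ.r b2 * ρ.r u2 = ρ.r y := lineW_mul ρ (lineW_swap (lineW_rot W4))
  have h3 : ρ.r a1 * ρ.r b2 = ρ.r m := lineW_mul ρ W5
  have h4 : ρ.r u1 * ρ.r b1 = ρ.r y := lineW_mul ρ (lineW_rot W3)
  have h5 : ρ.r a2 * ρ.r u2 = ρ.r x := lineW_mul ρ (lineW_swap (lineW_rot W2))
  have h6 : ρ.r b1 * ρ.r a2 = ρ.r m := lineW_mul ρ (lineW_swap W6)
  calc ρ.r x * ρ.r y = (ρ.r u1 * ρ.r a1) * (ρ.r b2 * ρ.r u2) := by rw [h1, h2]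
    _ = ρ.r u1 * (ρ.r a1 * ρ.r b2) * ρ.r u2 := by group
    _ = ρ.r u1 * (ρ.r b1 * ρ.r a2) * ρ.r u2 := by rw [h3, h6]
    _ = (ρ.r u1 * ρ.r b1) * (ρ.r a2 * ρ.r u2) := by group
    _ = ρ.r y * ρ.r x := by rw [h4, h5]

end RepAux

end GQ22Aux

/-- A faithful representation group of the `(2,2)`-GQ has order
`2^4` or `2^5`. -/
theorem gq22_faithful_rep_card {P : Type*} (S : SlimPLS P)
    (hGQ : S.IsGQ 2) {R : Type*} [Group R] (ρ : S.Rep R)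
    (hf : Function.Injective ρ.r) :
    Nat.card R = 2 ^ 4 ∨ Nat.card R = 2 ^ 5 := by
  classical
  obtain ⟨x⟩ := S.nonempty_pts
  obtain ⟨y, hyx, hncxy⟩ := hGQ.2.1 x
  have hxy : x ≠ y := hyx.symm
  obtain ⟨l1, l2, l3, ⟨hl1, hxl1⟩, ⟨hl2, hxl2⟩, ⟨hl3, hxl3⟩, h12, h13, h23, hcov⟩ :=
    three_lines hGQ x
  obtain ⟨u1, hu1l, hcxu1, hcyu1⟩ := common_nbr hGQ hl1 hxl1 hxy hncxy
  obtain ⟨u2, hu2l, hcxu2, hcyu2⟩ := common_nbr hGQ hl2 hxl2 hxy hncxy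
  obtain ⟨u3, hu3l, hcxu3, hcyu3⟩ := common_nbr hGQ hl3 hxl3 hxy hncxy
  obtain ⟨a1, W1, ha1l, hthird1⟩ := exists_third hl1 hxl1 hu1l (coll_ne hcxu1)
  obtain ⟨a2, W2, ha2l, hthird2⟩ := exists_third hl2 hxl2 hu2l (coll_ne hcxu2)
  obtain ⟨a3, W3, ha3l, hthird3⟩ := exists_third hl3 hxl3 hu3l (coll_ne hcxu3)
  have hcxa1 : S.Collinear x a1 := lineW_coll13 W1
  have hcxa2 : S.Collinear x a2 := lineW_coll13 W2
  have hcxa3 : S.Collinear x a3 := lineW_coll13 W3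
  -- commutativity of all the generators
  have hcommP : ∀ p q : P, ρ.r p * ρ.r q = ρ.r q * ρ.r p := by
    intro p q
    by_cases hpq : p = q
    · rw [hpq]
    by_cases hc : S.Collinear p q
    · obtain ⟨c, Wc⟩ := exists_lineW hc
      rw [lineW_mul ρ Wc, lineW_mul ρ (lineW_swap Wc)]
    · exact comm_of_noncoll hGQ ρ hpq hc
  have hcommR : ∀ a b : R, a * b = b * a := by
    intro a b
    have ha : a ∈ Subgroup.closure (Set.range ρ.r) := ρ.gen ▸ Subgroup.mem_top a
    have hb : b ∈ Subgroup.closure (Set.range ρ.r) := ρ.gen ▸ Subgroup.mem_top b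
    refine Subgroup.closure_induction₂ (p := fun u v _ _ => Commute u v)
      ?_ ?_ ?_ ?_ ?_ ?_ ?_ ha hb
    · rintro _ _ ⟨p, rfl⟩ ⟨q, rfl⟩; exact hcommP p q
    · intro u _; exact Commute.one_left u
    · intro u _; exact Commute.one_right u
    · intro u v w _ _ _ h1 h2; exact h1.mul_left h2
    · intro u v w _ _ _ h1 h2; exact h1.mul_right h2
    · intro u v _ _ h; exact h.inv_left
    · intro u v _ _ h; exact h.inv_right
  letI : CommGroup R := { (inferInstance : Group R) with mul_comm := hcommR }
  set g : Fin 5 → R := ![ρ.r x, ρ.r u1, ρ.r u2, ρ.r u3, ρ.r y] with hgdef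
  have hgsq : ∀ i, g i * g i = 1 := by
    intro i
    fin_cases i <;> exact rep_sq ρ _
  have hval : ∀ s t : ZMod 2, (s + t).val % 2 = (s.val + t.val) % 2 := by decide
  have key : ∀ (a : R), a * a = 1 → ∀ s t : ZMod 2,
      a ^ (s + t).val = a ^ s.val * a ^ t.val := by
    intro a hsq s t
    have hmod : ∀ n : ℕ, a ^ n = a ^ (n % 2) := by
      intro n
      conv_lhs => rw [← Nat.div_add_mod n 2]
      rw [pow_add, pow_mul, show a ^ 2 = 1 by rw [pow_two]; exact hsq, one_pow, one_mul]
    rw [← pow_add, hmod ((s + t).val), hmod (s.val + t.val), hval s t]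
  let f : Multiplicative (Fin 5 → ZMod 2) → R :=
    fun v => ∏ i, g i ^ ((Multiplicative.toAdd v) i).val
  have hfmul : ∀ v w, f (v * w) = f v * f w := by
    intro v w
    show (∏ i, g i ^ ((Multiplicative.toAdd (v * w)) i).val) = _
    rw [← Finset.prod_mul_distrib]
    refine Finset.prod_congr rfl fun i _ => ?_
    have hvw : (Multiplicative.toAdd (v * w)) i
        = (Multiplicative.toAdd v) i + (Multiplicative.toAdd w) i := rfl
    rw [hvw, key (g i) (hgsq i)]
  let F : Multiplicative (Fin 5 → ZMod 2) →* R := MonoidHom.mk' f hfmul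
  have hgmem : ∀ i, g i ∈ F.range := by
    intro i
    refine ⟨Multiplicative.ofAdd (Pi.single i 1), ?_⟩
    have hFi : F (Multiplicative.ofAdd (Pi.single i 1))
        = ∏ j, g j ^ ((Pi.single i (1 : ZMod 2) : Fin 5 → ZMod 2) j).val := rfl
    rw [hFi, Finset.prod_eq_single i]
    · rw [Pi.single_eq_same, show (1 : ZMod 2).val = 1 from rfl, pow_one]
    · intro j _ hji
      rw [Pi.single_eq_of_ne hji, show (0 : ZMod 2).val = 0 from rfl, pow_zero]
    · intro h; exact absurd (Finset.mem_univ i) h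
  have hxm : ρ.r x ∈ F.range := hgmem 0
  have hu1m : ρ.r u1 ∈ F.range := hgmem 1
  have hu2m : ρ.r u2 ∈ F.range := hgmem 2
  have hu3m : ρ.r u3 ∈ F.range := hgmem 3
  have hym : ρ.r y ∈ F.range := hgmem 4
  -- every point collinear with x
  have hx_case : ∀ z, S.Collinear x z → ρ.r z ∈ F.range := by
    intro z hc
    obtain ⟨hne, l, hl, hxl', hzl⟩ := hc
    rcases hcov l hl hxl' with rfl | rfl | rfl
    · rcases hthird1 z hzl with rfl | rfl | rfl
      · exact absurd rfl hne
      · exact hu1m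
      · exact (lineW_mul ρ (lineW_swap W1)) ▸ mul_mem hu1m hxm
    · rcases hthird2 z hzl with rfl | rfl | rfl
      · exact absurd rfl hne
      · exact hu2m
      · exact (lineW_mul ρ (lineW_swap W2)) ▸ mul_mem hu2m hxm
    · rcases hthird3 z hzl with rfl | rfl | rfl
      · exact absurd rfl hne
      · exact hu3m
      · exact (lineW_mul ρ (lineW_swap W3)) ▸ mul_mem hu3m hxm
  -- every point collinear with y
  have hy_case : ∀ z, S.Collinear y z → ρ.r z ∈ F.range := by
    intro z hc
    by_cases hcx : S.Collinear x z
    · exact hx_case z hcx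
    by_cases hzx : z = x
    · rw [hzx]; exact hxm
    obtain ⟨w, Wk⟩ := exists_lineW hc
    have hxw : x ≠ w := by
      rintro rfl
      exact hncxy (coll_symm (lineW_coll13 Wk))
    have hcxw : S.Collinear x w :=
      gq_third_coll hGQ Wk hxy (fun h => hzx h.symm) hxw hncxy hcx
    exact (lineW_mul ρ (lineW_rot (lineW_swap Wk))) ▸ mul_mem hym (hx_case w hcxw)
  -- all points
  have hmain : ∀ z : P, ρ.r z ∈ F.range := by
    intro z
    by_cases hcx : S.Collinear x z
    · exact hx_case z hcx
    by_cases hzx : z = x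
    · rw [hzx]; exact hxm
    by_cases hcy : S.Collinear y z
    · exact hy_case z hcy
    by_cases hzy : z = y
    · rw [hzy]; exact hym
    have hxz : x ≠ z := fun h => hzx h.symm
    obtain ⟨c1, c2, p1, p2, q1, q2, m', V1, V2, V3, V4, V5, V6⟩ :=
      gq_config hGQ (show y ≠ z from fun h => hzy h.symm) hcy
    have hxc1 : x ≠ c1 := by
      rintro rfl; exact hncxy (coll_symm (lineW_coll12 V1))
    have hxc2 : x ≠ c2 := by
      rintro rfl; exact hncxy (coll_symm (lineW_coll12 V2))
    have hxq2 : x ≠ q2 := by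
      rintro rfl; exact hcx (coll_symm (lineW_coll13 V4))
    by_cases hc2 : S.Collinear x c2
    · by_cases hc1 : S.Collinear x c1
      · have hxp1 : x ≠ p1 := by
          rintro rfl; exact hncxy (coll_symm (lineW_coll13 V1))
        have hnxp1 : ¬ S.Collinear x p1 :=
          gq_not_coll hGQ (lineW_rot V1) hxc1 hxp1 hxy hc1
        have hnxq2 : ¬ S.Collinear x q2 :=
          gq_not_coll hGQ (lineW_rot V4) hxc2 hxq2 hxz hc2
        have hxm' : x ≠ m' := by
          rintro rfl; exact hnxp1 (coll_symm (lineW_coll13 V5))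
        have hcxm : S.Collinear x m' := gq_third_coll hGQ V5 hxp1 hxq2 hxm' hnxp1 hnxq2
        have hq2eq : ρ.r q2 = ρ.r p1 * ρ.r m' := by
          have h5 : ρ.r p1 * ρ.r q2 = ρ.r m' := lineW_mul ρ V5
          calc ρ.r q2 = (ρ.r p1 * ρ.r p1) * ρ.r q2 := by rw [rep_sq ρ p1, one_mul]
            _ = ρ.r p1 * (ρ.r p1 * ρ.r q2) := by rw [mul_assoc]
            _ = ρ.r p1 * ρ.r m' := by rw [h5]
        have hz : ρ.r q2 * ρ.r c2 = ρ.r z := lineW_mul ρ (lineW_swap (lineW_rot V4))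
        rw [← hz, hq2eq]
        exact mul_mem (mul_mem (hy_case p1 (lineW_coll13 V1)) (hx_case m' hcxm))
          (hx_case c2 hc2)
      · have hxq1 : x ≠ q1 := by
          rintro rfl; exact hcx (coll_symm (lineW_coll13 V3))
        have hcxq1 : S.Collinear x q1 := gq_third_coll hGQ V3 hxz hxc1 hxq1 hcx hc1
        have hz : ρ.r c1 * ρ.r q1 = ρ.r z := lineW_mul ρ (lineW_rot V3)
        rw [← hz]
        exact mul_mem (hy_case c1 (lineW_coll12 V1)) (hx_case q1 hcxq1)
    · have hcxq2 : S.Collinear x q2 := gq_third_coll hGQ V4 hxz hxc2 hxq2 hcx hc2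
      have hz : ρ.r c2 * ρ.r q2 = ρ.r z := lineW_mul ρ (lineW_rot V4)
      rw [← hz]
      exact mul_mem (hy_case c2 (lineW_coll12 V2)) (hx_case q2 hcxq2)
  -- surjectivity and the upper bound
  have hsurj : Function.Surjective F := by
    rw [← MonoidHom.range_eq_top, eq_top_iff, ← ρ.gen]
    rw [Subgroup.closure_le]
    rintro _ ⟨z, rfl⟩
    exact hmain z
  have hfin : Finite R := Finite.of_surjective F hsurj
  have hdvd : Nat.card R ∣ 32 := by
    have hd := Subgroup.card_dvd_of_surjective F hsurj
    have hcard : Nat.card (Multiplicative (Fin 5 → ZMod 2)) = 32 := by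
      simp [Nat.card_eq_fintype_card]
    rwa [hcard] at hd
  -- lower bound: nine distinct elements
  have hne1 : ∀ p : P, ρ.r p ≠ 1 := by
    intro p h
    have h2 := ρ.order_two p
    rw [h, orderOf_one] at h2
    norm_num at h2
  have hrne : ∀ p q : P, p ≠ q → ρ.r p ≠ ρ.r q := fun p q h hh => h (hf hh)
  have cross12 : ∀ {p q : P}, p ∈ l1 → q ∈ l2 → p ≠ x → p ≠ q := by
    intro p q hp hq hpx
    rintro rfl
    exact h12 (S.unique_line l1 hl1 l2 hl2 x p hpx.symm hxl1 hp hxl2 hq)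
  have cross13 : ∀ {p q : P}, p ∈ l1 → q ∈ l3 → p ≠ x → p ≠ q := by
    intro p q hp hq hpx
    rintro rfl
    exact h13 (S.unique_line l1 hl1 l3 hl3 x p hpx.symm hxl1 hp hxl3 hq)
  have cross23 : ∀ {p q : P}, p ∈ l2 → q ∈ l3 → p ≠ x → p ≠ q := by
    intro p q hp hq hpx
    rintro rfl
    exact h23 (S.unique_line l2 hl2 l3 hl3 x p hpx.symm hxl2 hp hxl3 hq)
  have hyu : ∀ {p : P}, S.Collinear x p → y ≠ p := by
    intro p hc
    rintro rfl
    exact hncxy hc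
  letI : Fintype R := Fintype.ofFinite R
  have h9 : 9 ≤ Nat.card R := by
    rw [Nat.card_eq_fintype_card]
    have hnodup : ([1, ρ.r x, ρ.r u1, ρ.r u2, ρ.r u3, ρ.r a1, ρ.r a2, ρ.r a3,
        ρ.r y] : List R).Nodup := by
      simp only [List.nodup_cons, List.mem_cons, List.not_mem_nil, or_false, not_or,
        List.nodup_nil, and_true, not_false_eq_true]
      refine ⟨⟨?_, ?_, ?_, ?_, ?_, ?_, ?_, ?_⟩, ⟨?_, ?_, ?_, ?_, ?_, ?_, ?_⟩,
        ⟨?_, ?_, ?_, ?_, ?_, ?_⟩, ⟨?_, ?_, ?_, ?_, ?_⟩, ⟨?_, ?_, ?_, ?_⟩,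
        ⟨?_, ?_, ?_⟩, ⟨?_, ?_⟩, ?_⟩
      · exact (hne1 x).symm
      · exact (hne1 u1).symm
      · exact (hne1 u2).symm
      · exact (hne1 u3).symm
      · exact (hne1 a1).symm
      · exact (hne1 a2).symm
      · exact (hne1 a3).symm
      · exact (hne1 y).symm
      · exact hrne _ _ (coll_ne hcxu1)
      · exact hrne _ _ (coll_ne hcxu2)
      · exact hrne _ _ (coll_ne hcxu3)
      · exact hrne _ _ (coll_ne hcxa1)
      · exact hrne _ _ (coll_ne hcxa2)
      · exact hrne _ _ (coll_ne hcxa3)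
      · exact hrne _ _ hxy
      · exact hrne _ _ (cross12 hu1l hu2l (coll_ne hcxu1).symm)
      · exact hrne _ _ (cross13 hu1l hu3l (coll_ne hcxu1).symm)
      · exact hrne _ _ W1.2.2.1
      · exact hrne _ _ (cross12 hu1l ha2l (coll_ne hcxu1).symm)
      · exact hrne _ _ (cross13 hu1l ha3l (coll_ne hcxu1).symm)
      · exact hrne _ _ (hyu hcxu1).symm
      · exact hrne _ _ (cross23 hu2l hu3l (coll_ne hcxu2).symm)
      · exact hrne _ _ (cross12 ha1l hu2l (coll_ne hcxa1).symm).symm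
      · exact hrne _ _ W2.2.2.1
      · exact hrne _ _ (cross23 hu2l ha3l (coll_ne hcxu2).symm)
      · exact hrne _ _ (hyu hcxu2).symm
      · exact hrne _ _ (cross13 ha1l hu3l (coll_ne hcxa1).symm).symm
      · exact hrne _ _ (cross23 ha2l hu3l (coll_ne hcxa2).symm).symm
      · exact hrne _ _ W3.2.2.1
      · exact hrne _ _ (hyu hcxu3).symm
      · exact hrne _ _ (cross12 ha1l ha2l (coll_ne hcxa1).symm)
      · exact hrne _ _ (cross13 ha1l ha3l (coll_ne hcxa1).symm)
      · exact hrne _ _ (hyu hcxa1).symm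
      · exact hrne _ _ (cross23 ha2l ha3l (coll_ne hcxa2).symm)
      · exact hrne _ _ (hyu hcxa2).symm
      · exact hrne _ _ (hyu hcxa3).symm
    simpa using hnodup.length_le_card
  -- conclude
  have hle : Nat.card R ≤ 32 := Nat.le_of_dvd (by norm_num) hdvd
  have : Nat.card R = 16 ∨ Nat.card R = 32 := by
    interval_cases h : Nat.card R <;> revert hdvd <;> decide
  rcases this with h | h
  · left; rw [h]; norm_num
  · right; rw [h]; norm_num
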